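/- For every β with 0 ≤ β ≤ 1, the only real solution of the mean field equation m = tanh(βm) is m = 0; moreover, for every β with 0 < β ≤ 1, m = 0 is the unique minimizer of the Curie–Weiss free energy F_β on [−1,1]. -/

import Mathlib

open Set

/-- The Curie–Weiss free energy `F_β(m)` (using that `Real.log 0 = 0` in Mathlib, so the
convention `0·log 0 = 0` is automatic). -/
noncomputable def cwFreeEnergy (β m : ℝ) : ℝ :=
  -m ^ 2 / 2 + β⁻¹ *
    (((1 + m) / 2) * Real.log ((1 + m) / 2) + ((1 - m) / 2) * Real.log ((1 - m) / 2))

private lemma cw_sinh_lt_mul_cosh {x : ℝ} (hx : 0 < x) : Real.sinh x < x * Real.cosh x := by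
  have key : StrictMonoOn (fun y : ℝ => y * Real.cosh y - Real.sinh y) (Set.Ici 0) := by
    apply strictMonoOn_of_deriv_pos (convex_Ici 0)
    · exact ((continuous_id.mul Real.continuous_cosh).sub Real.continuous_sinh).continuousOn
    · intro y hy
      rw [interior_Ici, Set.mem_Ioi] at hy
      have h1 : HasDerivAt (fun y : ℝ => y * Real.cosh y - Real.sinh y)
          (1 * Real.cosh y + y * Real.sinh y - Real.cosh y) y :=
        ((hasDerivAt_id y).mul (Real.hasDerivAt_cosh y)).sub (Real.hasDerivAt_sinh y)
      rw [h1.deriv]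
      have h2 : 0 < Real.sinh y := Real.sinh_pos_iff.2 hy
      nlinarith
  have := key Set.self_mem_Ici (Set.mem_Ici.2 hx.le) hx
  simpa using this

private lemma cw_tanh_lt_self {x : ℝ} (hx : 0 < x) : Real.tanh x < x := by
  rw [Real.tanh_eq_sinh_div_cosh, div_lt_iff₀ (Real.cosh_pos x)]
  have := cw_sinh_lt_mul_cosh hx
  nlinarith

/-- entropy part: `G m = ((1+m)/2) log (1+m) + ((1-m)/2) log (1-m)` -/
noncomputable def cwG (m : ℝ) : ℝ :=
  ((1 + m) / 2) * Real.log (1 + m) + ((1 - m) / 2) * Real.log (1 - m)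

private lemma cwG_neg (m : ℝ) : cwG (-m) = cwG m := by
  have h1 : (1 : ℝ) + -m = 1 - m := by ring
  have h2 : (1 : ℝ) - -m = 1 + m := by ring
  rw [cwG, cwG, h1, h2]; ring

private lemma cwG_zero : cwG 0 = 0 := by simp [cwG]

private lemma cwG_one : cwG 1 = Real.log 2 := by
  norm_num [cwG]

private lemma cw_log_ineq {m : ℝ} (hm0 : 0 < m) (hm1 : m < 1) :
    2 * m < Real.log (1 + m) - Real.log (1 - m) := by
  have key : StrictMonoOn (fun y : ℝ => Real.log (1 + y) - Real.log (1 - y) - 2 * y)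
      (Set.Ico 0 1) := by
    apply strictMonoOn_of_deriv_pos (convex_Ico 0 1)
    · apply ContinuousOn.sub
      apply ContinuousOn.sub
      · exact Real.continuousOn_log.comp (by fun_prop)
          (fun y hy => by simp at hy ⊢; nlinarith [hy.1])
      · exact Real.continuousOn_log.comp (by fun_prop)
          (fun y hy => by simp at hy ⊢; nlinarith [hy.2])
      · fun_prop
    · intro y hy
      rw [interior_Ico, Set.mem_Ioo] at hy
      obtain ⟨hy0, hy1⟩ := hy
      have hp : (0 : ℝ) < 1 + y := by linarith
      have hq : (0 : ℝ) < 1 - y := by linarith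
      have d1 : HasDerivAt (fun y : ℝ => Real.log (1 + y)) ((1 + y)⁻¹ * 1) y :=
        (Real.hasDerivAt_log hp.ne').comp y ((hasDerivAt_id y).const_add 1)
      have d2 : HasDerivAt (fun y : ℝ => Real.log (1 - y)) ((1 - y)⁻¹ * (-1)) y :=
        (Real.hasDerivAt_log hq.ne').comp y ((hasDerivAt_id y).const_sub 1)
      have d3 : HasDerivAt (fun y : ℝ => 2 * y) 2 y := by
        simpa using (hasDerivAt_id y).const_mul 2
      have d : HasDerivAt (fun y : ℝ => Real.log (1 + y) - Real.log (1 - y) - 2 * y)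
          ((1 + y)⁻¹ * 1 - (1 - y)⁻¹ * (-1) - 2) y :=
        (d1.sub d2).sub d3
      rw [d.deriv]
      have h : (1 + y)⁻¹ * 1 - (1 - y)⁻¹ * (-1) - 2 = 2 * y ^ 2 / ((1 + y) * (1 - y)) := by
        field_simp; ring
      rw [h]
      apply div_pos (by nlinarith) (by positivity)
  have := key (Set.mem_Ico.2 ⟨le_refl 0, one_pos⟩) (Set.mem_Ico.2 ⟨hm0.le, hm1⟩) hm0
  simp only [Real.log_one, add_zero, sub_zero, mul_zero] at this
  linarith [this]

private lemma cwG_gt {m : ℝ} (hm0 : 0 < m) (hm1 : m < 1) : m ^ 2 / 2 < cwG m := by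
  have key : StrictMonoOn (fun y : ℝ => cwG y - y ^ 2 / 2) (Set.Ico 0 1) := by
    apply strictMonoOn_of_deriv_pos (convex_Ico 0 1)
    · apply ContinuousOn.sub
      · apply ContinuousOn.add
        · apply ContinuousOn.mul (by fun_prop)
          exact Real.continuousOn_log.comp (by fun_prop)
            (fun y hy => by simp at hy ⊢; nlinarith [hy.1])
        · apply ContinuousOn.mul (by fun_prop)
          exact Real.continuousOn_log.comp (by fun_prop)
            (fun y hy => by simp at hy ⊢; nlinarith [hy.2])
      · fun_prop
    · intro y hy
      rw [interior_Ico, Set.mem_Ioo] at hy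
      obtain ⟨hy0, hy1⟩ := hy
      have hp : (0 : ℝ) < 1 + y := by linarith
      have hq : (0 : ℝ) < 1 - y := by linarith
      have d1 : HasDerivAt (fun y : ℝ => ((1 + y) / 2) * Real.log (1 + y))
          ((1 / 2) * Real.log (1 + y) + ((1 + y) / 2) * ((1 + y)⁻¹ * 1)) y := by
        exact (((hasDerivAt_id y).const_add 1).div_const 2).mul
          ((Real.hasDerivAt_log hp.ne').comp y ((hasDerivAt_id y).const_add 1))
      have d2 : HasDerivAt (fun y : ℝ => ((1 - y) / 2) * Real.log (1 - y))
          ((-1 / 2) * Real.log (1 - y) + ((1 - y) / 2) * ((1 - y)⁻¹ * (-1))) y := by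
        exact (((hasDerivAt_id y).const_sub 1).div_const 2).mul
          ((Real.hasDerivAt_log hq.ne').comp y ((hasDerivAt_id y).const_sub 1))
      have d : HasDerivAt (fun y : ℝ => cwG y - y ^ 2 / 2)
          (((1 / 2) * Real.log (1 + y) + ((1 + y) / 2) * ((1 + y)⁻¹ * 1) +
            ((-1 / 2) * Real.log (1 - y) + ((1 - y) / 2) * ((1 - y)⁻¹ * (-1)))) - y) y := by
        have := ((d1.add d2).sub (((hasDerivAt_pow 2 y)).div_const 2))
        have hf : (fun y : ℝ => cwG y - y ^ 2 / 2) = ((fun y : ℝ => ((1 + y) / 2) * Real.log (1 + y)) +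
            fun y : ℝ => ((1 - y) / 2) * Real.log (1 - y)) - fun x : ℝ => x ^ 2 / 2 := by
          funext z; simp [cwG]
        rw [hf]
        exact this.congr_deriv (by norm_num)
      rw [d.deriv]
      have hA : ((1 + y) / 2) * ((1 + y)⁻¹ * 1) = 1 / 2 := by
        field_simp
      have hB : ((1 - y) / 2) * ((1 - y)⁻¹ * (-1)) = -(1 / 2) := by
        field_simp
      rw [hA, hB]
      have := cw_log_ineq hy0 hy1
      linarith
  have := key (Set.mem_Ico.2 ⟨le_refl 0, one_pos⟩) (Set.mem_Ico.2 ⟨hm0.le, hm1⟩) hm0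
  simp only [cwG_zero] at this
  norm_num at this
  linarith

private lemma cwG_ge {m : ℝ} (hm : -1 ≤ m) (hm1 : m ≤ 1) : m ^ 2 / 2 ≤ cwG m ∧
    (m ≠ 0 → m ^ 2 / 2 < cwG m) := by
  have log2 : (1 : ℝ) / 2 < Real.log 2 := by
    have := Real.log_two_gt_d9; linarith
  have main : ∀ x : ℝ, 0 < x → x ≤ 1 → x ^ 2 / 2 < cwG x := by
    intro x hx0 hx1
    rcases eq_or_lt_of_le hx1 with h | h
    · subst h; rw [cwG_one]; linarith
    · exact cwG_gt hx0 h
  rcases lt_trichotomy m 0 with h | h | h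
  · have := main (-m) (by linarith) (by linarith)
    rw [cwG_neg] at this
    have hsq : (-m) ^ 2 = m ^ 2 := by ring
    rw [hsq] at this
    exact ⟨this.le, fun _ => this⟩
  · subst h; simp [cwG_zero]
  · have := main m h hm1
    exact ⟨this.le, fun _ => this⟩

private lemma cw_entropy_eq {m : ℝ} :
    ((1 + m) / 2) * Real.log ((1 + m) / 2) + ((1 - m) / 2) * Real.log ((1 - m) / 2)
      = cwG m - Real.log 2 := by
  have key : ∀ a : ℝ, (a / 2) * Real.log (a / 2) = (a / 2) * (Real.log a - Real.log 2) := by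
    intro a
    rcases eq_or_ne a 0 with h | h
    · simp [h]
    · rw [Real.log_div h two_ne_zero]
  rw [cwG, key (1 + m), key (1 - m)]; ring

/-- For `0 ≤ β ≤ 1` the only real solution of `m = tanh (β m)` is `m = 0`,
and for `0 < β ≤ 1` the point `m = 0` is the unique minimizer of the Curie–Weiss free
energy `F_β` on `[-1, 1]`. -/
theorem curie_weiss_subcritical :
    (∀ β : ℝ, 0 ≤ β → β ≤ 1 → ∀ m : ℝ, m = Real.tanh (β * m) → m = 0) ∧
    (∀ β : ℝ, 0 < β → β ≤ 1 → ∀ m ∈ Icc (-1 : ℝ) 1,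
      cwFreeEnergy β 0 ≤ cwFreeEnergy β m ∧ (m ≠ 0 → cwFreeEnergy β 0 < cwFreeEnergy β m)) := by
  have helper : ∀ β m : ℝ, 0 ≤ β → β ≤ 1 → 0 < m → m = Real.tanh (β * m) → False := by
    intro β m hβ0 hβ1 hm heq
    rcases eq_or_lt_of_le hβ0 with h | h
    · rw [← h] at heq; simp [Real.tanh_zero] at heq; linarith
    · have hbm : 0 < β * m := mul_pos h hm
      have h1 : Real.tanh (β * m) < β * m := cw_tanh_lt_self hbm
      nlinarith
  constructor
  · intro β hβ0 hβ1 m heq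
    by_contra hm0
    rcases lt_or_gt_of_ne hm0 with hneg | hpos
    · have heq' : -m = Real.tanh (β * -m) := by
        rw [mul_neg, Real.tanh_neg, ← heq]
      exact helper β (-m) hβ0 hβ1 (by linarith) heq'
    · exact helper β m hβ0 hβ1 hpos heq
  · intro β hβ0 hβ1 m hm
    obtain ⟨hm1, hm2⟩ := hm
    have hβinv : 1 ≤ β⁻¹ := by
      have h := mul_inv_cancel₀ (ne_of_gt hβ0)
      nlinarith [inv_nonneg.2 hβ0.le]
    obtain ⟨hG1, hG2⟩ := cwG_ge hm1 hm2
    have hF0 : cwFreeEnergy β 0 = β⁻¹ * (cwG 0 - Real.log 2) := by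
      rw [cwFreeEnergy]
      rw [show ((1:ℝ) + 0) / 2 * Real.log ((1 + 0) / 2) + (1 - 0) / 2 * Real.log ((1 - 0) / 2)
        = cwG 0 - Real.log 2 from cw_entropy_eq]
      ring
    have hFm : cwFreeEnergy β m = -m ^ 2 / 2 + β⁻¹ * (cwG m - Real.log 2) := by
      rw [cwFreeEnergy, cw_entropy_eq]
    rw [hF0, hFm, cwG_zero]
    have hGnn : 0 ≤ cwG m := le_trans (by positivity) hG1
    constructor
    · nlinarith [sq_nonneg m]
    · intro hne
      have := hG2 hne
      nlinarith [sq_nonneg m]
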